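/- arXiv:1806.10284 — 4 statements merged into one kernel-verified Lean document; each statement's English description precedes it below -/
import Mathlib

section
/- Assume the diagonal matrices Λq and 3Λq − Λp are invertible (their entries, which are automatically nonnegative reals, are positive). Define Q₀ := (I₃⊗T)[Λ₁;Λ₂;Λ₃]Λq^{−1/2}, Q₁ := (I₃⊗T)[Λq−Λ₁Λs*; Λq−Λ₂Λs*; Λq−Λ₃Λs*]·((3Λq−Λp)Λq)^{−1/2}, Q₂ := (I₃⊗T)[Λ₃*−Λ₂*; Λ₁*−Λ₃*; Λ₂*−Λ₁*]·(3Λq−Λp)^{−1/2}, and Q := [Q₁, Q₂, Q₀] ∈ ℂ^{3n×3n} (columns concatenated). Then Q is unitary and C*C = Q · blockdiag(Λq, Λq, 0) · Q*. (Section 5.1, the eigen-decomposition of the discrete double-curl matrix C*C; the diagonal normalizing factors are those that make the columns orthonormal in the paper's construction Q₁ = (I − Q₀Q₀*)[T;T;T]·N₁, Q₂ = C*[T;T;T]·N₂.) -/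
open Matrix Kronecker

/-- Vertically stacked `3n × n` matrix `[A; B; C]`. -/
def stack3 {n : ℕ} (A B C : Matrix (Fin n) (Fin n) ℂ) :
    Matrix (Fin 3 × Fin n) (Fin n) ℂ :=
  Matrix.of fun p t => if p.1 = 0 then A p.2 t else if p.1 = 1 then B p.2 t else C p.2 t

/-- Horizontally concatenated `3n × 3n` matrix `[A, B, C]` from three `3n × n` blocks. -/
def hstack3 {n : ℕ} (A B C : Matrix (Fin 3 × Fin n) (Fin n) ℂ) :
    Matrix (Fin 3 × Fin n) (Fin 3 × Fin n) ℂ :=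
  Matrix.of fun p q => if q.1 = 0 then A p q.2 else if q.1 = 1 then B p q.2 else C p q.2

/-- The `3n × 3n` block diagonal matrix `blockdiag(A, B, 0)`. -/
def blockdiag3 {n : ℕ} (A B : Matrix (Fin n) (Fin n) ℂ) :
    Matrix (Fin 3 × Fin n) (Fin 3 × Fin n) ℂ :=
  Matrix.of fun p q =>
    if p.1 = q.1 then
      (if p.1 = 0 then A p.2 q.2 else if p.1 = 1 then B p.2 q.2 else 0)
    else 0

/-- The discrete curl operator `C = [[0, −C₃, C₂], [C₃, 0, −C₁], [−C₂, C₁, 0]]`. -/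
def curlMat {n : ℕ} (C₁ C₂ C₃ : Matrix (Fin n) (Fin n) ℂ) :
    Matrix (Fin 3 × Fin n) (Fin 3 × Fin n) ℂ :=
  Matrix.of fun p q =>
    if p.1 = 0 ∧ q.1 = 1 then -C₃ p.2 q.2
    else if p.1 = 0 ∧ q.1 = 2 then C₂ p.2 q.2
    else if p.1 = 1 ∧ q.1 = 0 then C₃ p.2 q.2
    else if p.1 = 1 ∧ q.1 = 2 then -C₁ p.2 q.2
    else if p.1 = 2 ∧ q.1 = 0 then -C₂ p.2 q.2
    else if p.1 = 2 ∧ q.1 = 1 then C₁ p.2 q.2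
    else 0

/-- For a diagonal matrix `D` with positive real diagonal entries, the diagonal
matrix `D^{−1/2}` of reciprocal square roots of its entries. -/
noncomputable def invSqrtDiag {n : ℕ} (D : Matrix (Fin n) (Fin n) ℂ) :
    Matrix (Fin n) (Fin n) ℂ :=
  Matrix.diagonal fun s => (((Real.sqrt ((D s s).re))⁻¹ : ℝ) : ℂ)

namespace S15

noncomputable def m3 (a b c : ℂ) (u v : ℝ) : Matrix (Fin 3) (Fin 3) ℂ :=
  Matrix.of fun i j =>
    if j = 0 then
      ((starRingEnd ℂ a * a + starRingEnd ℂ b * b + starRingEnd ℂ c * c)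
        - ![a,b,c] i * (starRingEnd ℂ a + starRingEnd ℂ b + starRingEnd ℂ c))
        * ((v:ℂ) * (u:ℂ))⁻¹
    else if j = 1 then
      (![starRingEnd ℂ c - starRingEnd ℂ b, starRingEnd ℂ a - starRingEnd ℂ c,
        starRingEnd ℂ b - starRingEnd ℂ a] i) * (v:ℂ)⁻¹
    else (![a,b,c] i) * (u:ℂ)⁻¹

def k3 (a b c : ℂ) : Matrix (Fin 3) (Fin 3) ℂ := !![0, -c, b; c, 0, -a; -b, a, 0]

set_option maxHeartbeats 2000000 in
lemma keyA (a b c : ℂ) (u v : ℝ) (hu0 : (u:ℂ) ≠ 0) (hv0 : (v:ℂ) ≠ 0)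
    (hU : (u:ℂ)^2 = starRingEnd ℂ a * a + starRingEnd ℂ b * b + starRingEnd ℂ c * c)
    (hV : (v:ℂ)^2 = 3*(starRingEnd ℂ a * a + starRingEnd ℂ b * b + starRingEnd ℂ c * c)
      - (a+b+c)*(starRingEnd ℂ a + starRingEnd ℂ b + starRingEnd ℂ c)) :
    (m3 a b c u v)ᴴ * m3 a b c u v = 1 := by
  ext i j
  fin_cases i <;> fin_cases j <;>
    simp only [show ((⟨0, by omega⟩ : Fin 3)) = 0 from rfl,
      show ((⟨1, by omega⟩ : Fin 3)) = 1 from rfl,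
      show ((⟨2, by omega⟩ : Fin 3)) = 2 from rfl] <;>
    simp [m3, Matrix.mul_apply, Fin.sum_univ_three, Matrix.conjTranspose_apply,
      Matrix.one_apply, Complex.star_def, _root_.map_mul, map_sub, map_add, map_inv₀,
      Complex.conj_conj, Complex.conj_ofReal, -Complex.ofReal_inv] <;>
    (first
      | ring1
      | (field_simp;
         first
          | linear_combination -hU
          | linear_combination hU
          | linear_combination -hV
          | linear_combination hV
          | linear_combination (-((v:ℂ)^2))*hU
              - (starRingEnd ℂ a * a + starRingEnd ℂ b * b + starRingEnd ℂ c * c)*hV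
          | linear_combination ((v:ℂ)^2)*hU
              + (starRingEnd ℂ a * a + starRingEnd ℂ b * b + starRingEnd ℂ c * c)*hV))

lemma key3 (a b c : ℂ) :
    (k3 a b c)ᴴ * k3 a b c = Matrix.of (fun i j =>
      (if i = j then (starRingEnd ℂ a * a + starRingEnd ℂ b * b + starRingEnd ℂ c * c) else 0)
        - ![a,b,c] i * starRingEnd ℂ (![a,b,c] j)) := by
  ext i j
  fin_cases i <;> fin_cases j <;>
    simp [k3, Matrix.mul_apply, Fin.sum_univ_three, Matrix.conjTranspose_apply,
      Complex.star_def] <;> ring1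

set_option maxHeartbeats 2000000 in

set_option maxHeartbeats 2000000 in
lemma key2 (a b c : ℂ) (u v : ℝ) (hu0 : (u:ℂ) ≠ 0) (hv0 : (v:ℂ) ≠ 0)
    (hU : (u:ℂ)^2 = starRingEnd ℂ a * a + starRingEnd ℂ b * b + starRingEnd ℂ c * c)
    (hV : (v:ℂ)^2 = 3*(starRingEnd ℂ a * a + starRingEnd ℂ b * b + starRingEnd ℂ c * c)
      - (a+b+c)*(starRingEnd ℂ a + starRingEnd ℂ b + starRingEnd ℂ c)) :
    m3 a b c u v * Matrix.diagonal ![(starRingEnd ℂ a * a + starRingEnd ℂ b * b + starRingEnd ℂ c * c),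
      (starRingEnd ℂ a * a + starRingEnd ℂ b * b + starRingEnd ℂ c * c), 0] * (m3 a b c u v)ᴴ
    = Matrix.of (fun i j =>
      (if i = j then (starRingEnd ℂ a * a + starRingEnd ℂ b * b + starRingEnd ℂ c * c) else 0)
        - ![a,b,c] i * starRingEnd ℂ (![a,b,c] j)) := by
  have h2 : m3 a b c u v * (m3 a b c u v)ᴴ = 1 :=
    mul_eq_one_comm.mp (keyA a b c u v hu0 hv0 hU hV)
  have H := Matrix.ext_iff.2 h2
  have h6 : (starRingEnd ℂ a * a + starRingEnd ℂ b * b + starRingEnd ℂ c * c)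
      * ((u:ℂ)⁻¹ * (u:ℂ)⁻¹) = 1 := by
    rw [← hU]; field_simp
  ext i j
  fin_cases i <;> fin_cases j
  · have h3 := H 0 0
    simp [m3, Matrix.mul_apply, Fin.sum_univ_three, Matrix.conjTranspose_apply,
      Matrix.one_apply, Matrix.diagonal_apply, Complex.star_def, _root_.map_mul,
      map_sub, map_add, map_inv₀, Complex.conj_conj, Complex.conj_ofReal,
      -Complex.ofReal_inv] at h3 ⊢
    linear_combination (starRingEnd ℂ a * a + starRingEnd ℂ b * b + starRingEnd ℂ c * c) * h3 - (a * starRingEnd ℂ a) * h6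
  · have h3 := H 0 1
    simp [m3, Matrix.mul_apply, Fin.sum_univ_three, Matrix.conjTranspose_apply,
      Matrix.one_apply, Matrix.diagonal_apply, Complex.star_def, _root_.map_mul,
      map_sub, map_add, map_inv₀, Complex.conj_conj, Complex.conj_ofReal,
      -Complex.ofReal_inv] at h3 ⊢
    linear_combination (starRingEnd ℂ a * a + starRingEnd ℂ b * b + starRingEnd ℂ c * c) * h3 - (a * starRingEnd ℂ b) * h6
  · have h3 := H 0 2
    simp [m3, Matrix.mul_apply, Fin.sum_univ_three, Matrix.conjTranspose_apply,
      Matrix.one_apply, Matrix.diagonal_apply, Complex.star_def, _root_.map_mul,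
      map_sub, map_add, map_inv₀, Complex.conj_conj, Complex.conj_ofReal,
      -Complex.ofReal_inv] at h3 ⊢
    linear_combination (starRingEnd ℂ a * a + starRingEnd ℂ b * b + starRingEnd ℂ c * c) * h3 - (a * starRingEnd ℂ c) * h6
  · have h3 := H 1 0
    simp [m3, Matrix.mul_apply, Fin.sum_univ_three, Matrix.conjTranspose_apply,
      Matrix.one_apply, Matrix.diagonal_apply, Complex.star_def, _root_.map_mul,
      map_sub, map_add, map_inv₀, Complex.conj_conj, Complex.conj_ofReal,
      -Complex.ofReal_inv] at h3 ⊢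
    linear_combination (starRingEnd ℂ a * a + starRingEnd ℂ b * b + starRingEnd ℂ c * c) * h3 - (b * starRingEnd ℂ a) * h6
  · have h3 := H 1 1
    simp [m3, Matrix.mul_apply, Fin.sum_univ_three, Matrix.conjTranspose_apply,
      Matrix.one_apply, Matrix.diagonal_apply, Complex.star_def, _root_.map_mul,
      map_sub, map_add, map_inv₀, Complex.conj_conj, Complex.conj_ofReal,
      -Complex.ofReal_inv] at h3 ⊢
    linear_combination (starRingEnd ℂ a * a + starRingEnd ℂ b * b + starRingEnd ℂ c * c) * h3 - (b * starRingEnd ℂ b) * h6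
  · have h3 := H 1 2
    simp [m3, Matrix.mul_apply, Fin.sum_univ_three, Matrix.conjTranspose_apply,
      Matrix.one_apply, Matrix.diagonal_apply, Complex.star_def, _root_.map_mul,
      map_sub, map_add, map_inv₀, Complex.conj_conj, Complex.conj_ofReal,
      -Complex.ofReal_inv] at h3 ⊢
    linear_combination (starRingEnd ℂ a * a + starRingEnd ℂ b * b + starRingEnd ℂ c * c) * h3 - (b * starRingEnd ℂ c) * h6
  · have h3 := H 2 0
    simp [m3, Matrix.mul_apply, Fin.sum_univ_three, Matrix.conjTranspose_apply,
      Matrix.one_apply, Matrix.diagonal_apply, Complex.star_def, _root_.map_mul,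
      map_sub, map_add, map_inv₀, Complex.conj_conj, Complex.conj_ofReal,
      -Complex.ofReal_inv] at h3 ⊢
    linear_combination (starRingEnd ℂ a * a + starRingEnd ℂ b * b + starRingEnd ℂ c * c) * h3 - (c * starRingEnd ℂ a) * h6
  · have h3 := H 2 1
    simp [m3, Matrix.mul_apply, Fin.sum_univ_three, Matrix.conjTranspose_apply,
      Matrix.one_apply, Matrix.diagonal_apply, Complex.star_def, _root_.map_mul,
      map_sub, map_add, map_inv₀, Complex.conj_conj, Complex.conj_ofReal,
      -Complex.ofReal_inv] at h3 ⊢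
    linear_combination (starRingEnd ℂ a * a + starRingEnd ℂ b * b + starRingEnd ℂ c * c) * h3 - (c * starRingEnd ℂ b) * h6
  · have h3 := H 2 2
    simp [m3, Matrix.mul_apply, Fin.sum_univ_three, Matrix.conjTranspose_apply,
      Matrix.one_apply, Matrix.diagonal_apply, Complex.star_def, _root_.map_mul,
      map_sub, map_add, map_inv₀, Complex.conj_conj, Complex.conj_ofReal,
      -Complex.ofReal_inv] at h3 ⊢
    linear_combination (starRingEnd ℂ a * a + starRingEnd ℂ b * b + starRingEnd ℂ c * c) * h3 - (c * starRingEnd ℂ c) * h6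

def blk {n : ℕ} (f : Fin 3 → Fin 3 → Matrix (Fin n) (Fin n) ℂ) :
    Matrix (Fin 3 × Fin n) (Fin 3 × Fin n) ℂ :=
  Matrix.of fun p q => f p.1 q.1 p.2 q.2

lemma blk_mul {n : ℕ} (f g : Fin 3 → Fin 3 → Matrix (Fin n) (Fin n) ℂ) :
    blk f * blk g = blk fun i j => ∑ k, f i k * g k j := by
  ext ⟨i, r⟩ ⟨j, s⟩
  simp only [blk, Matrix.mul_apply, Matrix.of_apply, Fintype.sum_prod_type,
    Finset.sum_apply, Matrix.sum_apply]

lemma blk_conjT {n : ℕ} (f : Fin 3 → Fin 3 → Matrix (Fin n) (Fin n) ℂ) :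
    (blk f)ᴴ = blk fun i j => (f j i)ᴴ := by
  ext ⟨i, r⟩ ⟨j, s⟩
  simp [blk, Matrix.conjTranspose_apply]

lemma blk_congr {n : ℕ} {f g : Fin 3 → Fin 3 → Matrix (Fin n) (Fin n) ℂ}
    (h : ∀ i j, f i j = g i j) : blk f = blk g := by
  have : f = g := funext fun i => funext fun j => h i j
  rw [this]

lemma blk_one {n : ℕ} :
    blk (fun i j => if i = j then (1 : Matrix (Fin n) (Fin n) ℂ) else 0) = 1 := by
  ext ⟨i, r⟩ ⟨j, s⟩
  by_cases h : i = j <;> by_cases h2 : r = s <;>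
    simp [blk, Matrix.one_apply, Prod.ext_iff, h, h2]

lemma kron_mul_stack3 {n : ℕ} (T A B C : Matrix (Fin n) (Fin n) ℂ) :
    ((1 : Matrix (Fin 3) (Fin 3) ℂ) ⊗ₖ T) * stack3 A B C = stack3 (T*A) (T*B) (T*C) := by
  ext ⟨i, r⟩ s
  by_cases h0 : i = 0 <;> by_cases h1 : i = 1 <;>
    [skip; skip; skip; (have h2 : i = 2 := by fin_cases i <;> simp_all)] <;>
    simp [stack3, Matrix.mul_apply, Fintype.sum_prod_type, Fin.sum_univ_three,
      Matrix.one_apply, h0, h1, kroneckerMap_apply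
      ] <;> simp_all

lemma stack3_mulR {n : ℕ} (A B C E : Matrix (Fin n) (Fin n) ℂ) :
    stack3 A B C * E = stack3 (A*E) (B*E) (C*E) := by
  ext ⟨i, r⟩ s
  by_cases h0 : i = 0 <;> by_cases h1 : i = 1 <;>
    simp [stack3, Matrix.mul_apply, h0, h1]

lemma hstack3_stack_blk {n : ℕ} (A₁ A₂ A₃ B₁ B₂ B₃ C₁ C₂ C₃ : Matrix (Fin n) (Fin n) ℂ) :
    hstack3 (stack3 A₁ A₂ A₃) (stack3 B₁ B₂ B₃) (stack3 C₁ C₂ C₃)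
      = blk (fun i j =>
          if j = 0 then (if i = 0 then A₁ else if i = 1 then A₂ else A₃)
          else if j = 1 then (if i = 0 then B₁ else if i = 1 then B₂ else B₃)
          else (if i = 0 then C₁ else if i = 1 then C₂ else C₃)) := by
  ext ⟨i, r⟩ ⟨j, s⟩
  simp only [hstack3, stack3, blk, Matrix.of_apply]
  split_ifs <;> rfl

lemma curl_blk {n : ℕ} (C₁ C₂ C₃ : Matrix (Fin n) (Fin n) ℂ) :
    curlMat C₁ C₂ C₃ = blk (fun i j =>
      if i = 0 ∧ j = 1 then -C₃
      else if i = 0 ∧ j = 2 then C₂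
      else if i = 1 ∧ j = 0 then C₃
      else if i = 1 ∧ j = 2 then -C₁
      else if i = 2 ∧ j = 0 then -C₂
      else if i = 2 ∧ j = 1 then C₁
      else 0) := by
  ext ⟨i, r⟩ ⟨j, s⟩
  simp only [curlMat, blk, Matrix.of_apply]
  split_ifs <;> simp

lemma blockdiag3_blk {n : ℕ} (A B : Matrix (Fin n) (Fin n) ℂ) :
    blockdiag3 A B = blk (fun i j =>
      if i = j then (if i = 0 then A else if i = 1 then B else 0) else 0) := by
  ext ⟨i, r⟩ ⟨j, s⟩
  simp only [blockdiag3, blk, Matrix.of_apply]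
  split_ifs <;> simp

lemma Tcancel {n : ℕ} {T : Matrix (Fin n) (Fin n) ℂ} (hT : Tᴴ * T = 1)
    (X Y : Matrix (Fin n) (Fin n) ℂ) : (T*X)ᴴ * (T*Y) = Xᴴ * Y := by
  rw [Matrix.conjTranspose_mul, Matrix.mul_assoc, ← Matrix.mul_assoc Tᴴ, hT, Matrix.one_mul]

lemma Tconj {n : ℕ} {T : Matrix (Fin n) (Fin n) ℂ} (hT : Tᴴ * T = 1)
    (X Y : Matrix (Fin n) (Fin n) ℂ) :
    (T*X*Tᴴ)ᴴ * (T*Y*Tᴴ) = T * (Xᴴ * Y) * Tᴴ := by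
  rw [Matrix.conjTranspose_mul, Matrix.conjTranspose_mul, Matrix.conjTranspose_conjTranspose]
  simp only [Matrix.mul_assoc]
  rw [← Matrix.mul_assoc Tᴴ T (Y * Tᴴ), hT, Matrix.one_mul]


noncomputable def md {n : ℕ} (T : Matrix (Fin n) (Fin n) ℂ)
    (d₁ d₂ d₃ : Fin n → ℂ) (u v : Fin n → ℝ) : Fin 3 → Fin 3 → Matrix (Fin n) (Fin n) ℂ :=
  fun i j => T * Matrix.diagonal (fun s => m3 (d₁ s) (d₂ s) (d₃ s) (u s) (v s) i j)

def dbf {n : ℕ} (q : Fin n → ℂ) : Fin 3 → Fin 3 → Matrix (Fin n) (Fin n) ℂ :=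
  fun i j => if i = j then
    (if i = 0 then Matrix.diagonal q else if i = 1 then Matrix.diagonal q else 0) else 0

noncomputable def kd {n : ℕ} (d₁ d₂ d₃ : Fin n → ℂ) : Fin 3 → Fin 3 → Matrix (Fin n) (Fin n) ℂ :=
  fun i j => Matrix.diagonal (fun s => k3 (d₁ s) (d₂ s) (d₃ s) i j)

section Big
variable {n : ℕ} (T : Matrix (Fin n) (Fin n) ℂ) (d₁ d₂ d₃ : Fin n → ℂ) (u v : Fin n → ℝ)

lemma bigQ (hT : Tᴴ * T = 1)
    (hu0 : ∀ s, ((u s : ℝ) : ℂ) ≠ 0) (hv0 : ∀ s, ((v s : ℝ) : ℂ) ≠ 0)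
    (hU : ∀ s, ((u s : ℝ) : ℂ)^2 = starRingEnd ℂ (d₁ s) * d₁ s + starRingEnd ℂ (d₂ s) * d₂ s
      + starRingEnd ℂ (d₃ s) * d₃ s)
    (hV : ∀ s, ((v s : ℝ) : ℂ)^2 = 3*(starRingEnd ℂ (d₁ s) * d₁ s + starRingEnd ℂ (d₂ s) * d₂ s
      + starRingEnd ℂ (d₃ s) * d₃ s)
      - (d₁ s + d₂ s + d₃ s)*(starRingEnd ℂ (d₁ s) + starRingEnd ℂ (d₂ s) + starRingEnd ℂ (d₃ s))) :
    (blk (md T d₁ d₂ d₃ u v))ᴴ * blk (md T d₁ d₂ d₃ u v) = 1 := by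
  rw [blk_conjT, blk_mul, ← blk_one]
  refine blk_congr fun i j => ?_
  have e1 : ∀ k : Fin 3, (md T d₁ d₂ d₃ u v k i)ᴴ * md T d₁ d₂ d₃ u v k j
      = Matrix.diagonal (fun s => starRingEnd ℂ (m3 (d₁ s) (d₂ s) (d₃ s) (u s) (v s) k i)
          * m3 (d₁ s) (d₂ s) (d₃ s) (u s) (v s) k j) := by
    intro k
    simp only [md]
    rw [Tcancel hT, Matrix.diagonal_conjTranspose, Matrix.diagonal_mul_diagonal]
    rfl
  rw [Fin.sum_univ_three, e1 0, e1 1, e1 2, Matrix.diagonal_add, Matrix.diagonal_add]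
  have hone : ∀ s, starRingEnd ℂ (m3 (d₁ s) (d₂ s) (d₃ s) (u s) (v s) 0 i)
        * m3 (d₁ s) (d₂ s) (d₃ s) (u s) (v s) 0 j
      + starRingEnd ℂ (m3 (d₁ s) (d₂ s) (d₃ s) (u s) (v s) 1 i)
        * m3 (d₁ s) (d₂ s) (d₃ s) (u s) (v s) 1 j
      + starRingEnd ℂ (m3 (d₁ s) (d₂ s) (d₃ s) (u s) (v s) 2 i)
        * m3 (d₁ s) (d₂ s) (d₃ s) (u s) (v s) 2 j
      = if i = j then 1 else 0 := by
    intro s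
    have h := Matrix.ext_iff.2 (keyA (d₁ s) (d₂ s) (d₃ s) (u s) (v s)
      (hu0 s) (hv0 s) (hU s) (hV s)) i j
    simpa [Matrix.mul_apply, Fin.sum_univ_three, Matrix.conjTranspose_apply,
      Matrix.one_apply, Complex.star_def] using h
  by_cases hij : i = j
  · rw [if_pos hij, ← Matrix.diagonal_one]
    apply congrArg Matrix.diagonal
    funext s
    have h2 := hone s
    rw [if_pos hij] at h2
    linear_combination h2
  · rw [if_neg hij, ← Matrix.diagonal_zero]
    apply congrArg Matrix.diagonal
    funext s
    have h2 := hone s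
    rw [if_neg hij] at h2
    linear_combination h2

lemma bigC (q : Fin n → ℂ) (hT : Tᴴ * T = 1)
    (hu0 : ∀ s, ((u s : ℝ) : ℂ) ≠ 0) (hv0 : ∀ s, ((v s : ℝ) : ℂ) ≠ 0)
    (hU : ∀ s, ((u s : ℝ) : ℂ)^2 = starRingEnd ℂ (d₁ s) * d₁ s + starRingEnd ℂ (d₂ s) * d₂ s
      + starRingEnd ℂ (d₃ s) * d₃ s)
    (hV : ∀ s, ((v s : ℝ) : ℂ)^2 = 3*(starRingEnd ℂ (d₁ s) * d₁ s + starRingEnd ℂ (d₂ s) * d₂ s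
      + starRingEnd ℂ (d₃ s) * d₃ s)
      - (d₁ s + d₂ s + d₃ s)*(starRingEnd ℂ (d₁ s) + starRingEnd ℂ (d₂ s) + starRingEnd ℂ (d₃ s)))
    (hq : ∀ s, q s = starRingEnd ℂ (d₁ s) * d₁ s + starRingEnd ℂ (d₂ s) * d₂ s
      + starRingEnd ℂ (d₃ s) * d₃ s) :
    (blk (fun i j => T * kd d₁ d₂ d₃ i j * Tᴴ))ᴴ * blk (fun i j => T * kd d₁ d₂ d₃ i j * Tᴴ)
    = blk (md T d₁ d₂ d₃ u v) * blk (dbf q) * (blk (md T d₁ d₂ d₃ u v))ᴴ := by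
  rw [blk_conjT, blk_mul, blk_mul, blk_conjT, blk_mul]
  refine blk_congr fun i j => ?_
  simp only [Fin.sum_univ_three, dbf, md, kd]
  simp only [show ((0:Fin 3) = 0) = True by simp, show ((1:Fin 3) = 0) = False by simp,
    show ((2:Fin 3) = 0) = False by simp, show ((0:Fin 3) = 1) = False by simp,
    show ((1:Fin 3) = 1) = True by simp, show ((2:Fin 3) = 1) = False by simp,
    show ((0:Fin 3) = 2) = False by simp, show ((1:Fin 3) = 2) = False by simp,
    show ((2:Fin 3) = 2) = True by simp, if_true, if_false,
    Matrix.mul_zero, Matrix.zero_mul, add_zero, zero_add]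
  simp only [Tconj hT]
  simp only [Matrix.conjTranspose_mul]
  have tp : ∀ (A B C : Matrix (Fin n) (Fin n) ℂ), (T*A)*B*(Cᴴ*Tᴴ) = T*(A*B*Cᴴ)*Tᴴ := by
    intros; simp [Matrix.mul_assoc]
  rw [tp, tp]
  have ts3 : ∀ (A B C : Matrix (Fin n) (Fin n) ℂ),
      T*A*Tᴴ + T*B*Tᴴ + T*C*Tᴴ = T*(A+B+C)*Tᴴ := by
    intros; simp [Matrix.mul_add, Matrix.add_mul]
  have ts2 : ∀ (A B : Matrix (Fin n) (Fin n) ℂ), T*A*Tᴴ + T*B*Tᴴ = T*(A+B)*Tᴴ := by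
    intros; simp [Matrix.mul_add, Matrix.add_mul]
  rw [ts3, ts2]
  congr 1
  congr 1
  simp only [Matrix.diagonal_conjTranspose, Matrix.diagonal_mul_diagonal, Matrix.diagonal_add]
  apply congrArg Matrix.diagonal
  funext s
  try simp only [Pi.add_apply, Pi.mul_apply, Pi.star_apply, Complex.star_def, hq]
  have h2 := Matrix.ext_iff.2 (key2 (d₁ s) (d₂ s) (d₃ s) (u s) (v s)
    (hu0 s) (hv0 s) (hU s) (hV s)) i j
  have h3 := Matrix.ext_iff.2 (key3 (d₁ s) (d₂ s) (d₃ s)) i j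
  simp only [Matrix.mul_apply, Fin.sum_univ_three, Matrix.conjTranspose_apply,
    Matrix.diagonal_apply, Matrix.of_apply, Complex.star_def,
    show ((0:Fin 3) = 0) = True by simp, show ((1:Fin 3) = 0) = False by simp,
    show ((2:Fin 3) = 0) = False by simp, show ((0:Fin 3) = 1) = False by simp,
    show ((1:Fin 3) = 1) = True by simp, show ((2:Fin 3) = 1) = False by simp,
    show ((0:Fin 3) = 2) = False by simp, show ((1:Fin 3) = 2) = False by simp,
    show ((2:Fin 3) = 2) = True by simp, if_true, if_false,
    Matrix.cons_val_zero, Matrix.cons_val_one, Matrix.head_cons,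
    Matrix.cons_val_two, Matrix.tail_cons,
    mul_zero, zero_mul, add_zero, zero_add] at h2 h3
  try simp only [Pi.add_apply, Pi.mul_apply, Pi.star_apply, Function.comp_apply,
    Complex.star_def, hq s]
  linear_combination h3 - h2

end Big
end S15

open S15 in
set_option maxHeartbeats 2000000 in
/-- Section 5.1: `Q = [Q₁, Q₂, Q₀]` is unitary and gives the eigen-decomposition
`C*C = Q blockdiag(Λq, Λq, 0) Q*` of the discrete double-curl matrix. -/
theorem stmt_15 (n : ℕ) (hn : 1 ≤ n)
    (T Λ₁ Λ₂ Λ₃ C₁ C₂ C₃ : Matrix (Fin n) (Fin n) ℂ)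
    (hT : Tᴴ * T = 1) (hT' : T * Tᴴ = 1)
    (hΛ₁ : Λ₁.IsDiag) (hΛ₂ : Λ₂.IsDiag) (hΛ₃ : Λ₃.IsDiag)
    (h₁ : C₁ * T = T * Λ₁) (h₂ : C₂ * T = T * Λ₂) (h₃ : C₃ * T = T * Λ₃)
    (Λq Λs Λp : Matrix (Fin n) (Fin n) ℂ)
    (hΛq : Λq = Λ₁ᴴ * Λ₁ + Λ₂ᴴ * Λ₂ + Λ₃ᴴ * Λ₃)
    (hΛs : Λs = Λ₁ + Λ₂ + Λ₃)
    (hΛp : Λp = Λs * Λsᴴ)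
    (hq : ∀ s, 0 < (Λq s s).re)
    (hp : ∀ s, 0 < ((((3 : ℂ) • Λq - Λp)) s s).re)
    (Q₀ Q₁ Q₂ : Matrix (Fin 3 × Fin n) (Fin n) ℂ)
    (hQ₀ : Q₀ = ((1 : Matrix (Fin 3) (Fin 3) ℂ) ⊗ₖ T) * stack3 Λ₁ Λ₂ Λ₃ * invSqrtDiag Λq)
    (hQ₁ : Q₁ = ((1 : Matrix (Fin 3) (Fin 3) ℂ) ⊗ₖ T)
      * stack3 (Λq - Λ₁ * Λsᴴ) (Λq - Λ₂ * Λsᴴ) (Λq - Λ₃ * Λsᴴ)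
      * invSqrtDiag (((3 : ℂ) • Λq - Λp) * Λq))
    (hQ₂ : Q₂ = ((1 : Matrix (Fin 3) (Fin 3) ℂ) ⊗ₖ T)
      * stack3 (Λ₃ᴴ - Λ₂ᴴ) (Λ₁ᴴ - Λ₃ᴴ) (Λ₂ᴴ - Λ₁ᴴ)
      * invSqrtDiag ((3 : ℂ) • Λq - Λp))
    (Q : Matrix (Fin 3 × Fin n) (Fin 3 × Fin n) ℂ)
    (hQ : Q = hstack3 Q₁ Q₂ Q₀) :
    Qᴴ * Q = 1 ∧ Q * Qᴴ = 1 ∧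
    (curlMat C₁ C₂ C₃)ᴴ * curlMat C₁ C₂ C₃ = Q * blockdiag3 Λq Λq * Qᴴ := by
  obtain ⟨d₁, rfl⟩ : ∃ d, Λ₁ = Matrix.diagonal d := ⟨Λ₁.diag, hΛ₁.diagonal_diag.symm⟩
  obtain ⟨d₂, rfl⟩ : ∃ d, Λ₂ = Matrix.diagonal d := ⟨Λ₂.diag, hΛ₂.diagonal_diag.symm⟩
  obtain ⟨d₃, rfl⟩ : ∃ d, Λ₃ = Matrix.diagonal d := ⟨Λ₃.diag, hΛ₃.diagonal_diag.symm⟩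
  subst hΛs hΛp hΛq hQ₀ hQ₁ hQ₂ hQ
  set σd : Fin n → ℂ := fun s => d₁ s + d₂ s + d₃ s with hσd
  set qd : Fin n → ℂ := fun s =>
    starRingEnd ℂ (d₁ s) * d₁ s + starRingEnd ℂ (d₂ s) * d₂ s + starRingEnd ℂ (d₃ s) * d₃ s
    with hqd
  set pd : Fin n → ℂ := fun s => σd s * starRingEnd ℂ (σd s) with hpd
  set rd : Fin n → ℂ := fun s => 3 * qd s - pd s with hrd
  have hS : Matrix.diagonal d₁ + Matrix.diagonal d₂ + Matrix.diagonal d₃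
      = Matrix.diagonal σd := by
    rw [Matrix.diagonal_add, Matrix.diagonal_add]
  have hQd : (Matrix.diagonal d₁)ᴴ * Matrix.diagonal d₁
      + (Matrix.diagonal d₂)ᴴ * Matrix.diagonal d₂
      + (Matrix.diagonal d₃)ᴴ * Matrix.diagonal d₃ = Matrix.diagonal qd := by
    simp only [Matrix.diagonal_conjTranspose, Matrix.diagonal_mul_diagonal,
      Matrix.diagonal_add]
    apply congrArg Matrix.diagonal
    funext s
    simp [hqd, Complex.star_def]
  rw [hS] at hp ⊢
  rw [hQd] at hq hp ⊢
  have hPd : Matrix.diagonal σd * (Matrix.diagonal σd)ᴴ = Matrix.diagonal pd := by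
    simp only [Matrix.diagonal_conjTranspose, Matrix.diagonal_mul_diagonal]
    apply congrArg Matrix.diagonal
    funext s
    simp [hpd, Complex.star_def]
  rw [hPd] at hp ⊢
  have hRd : (3:ℂ) • Matrix.diagonal qd - Matrix.diagonal pd = Matrix.diagonal rd := by
    rw [← Matrix.diagonal_smul, Matrix.diagonal_sub]
    apply congrArg Matrix.diagonal
    funext s
    simp [hrd]
  rw [hRd] at hp ⊢
  rw [Matrix.diagonal_mul_diagonal rd qd]
  have hq' : ∀ s, 0 < (qd s).re := by intro s; simpa using hq s
  have hp' : ∀ s, 0 < (rd s).re := by intro s; simpa using hp s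
  have hqreal : ∀ s, (((qd s).re : ℝ) : ℂ) = qd s := by
    intro s
    have h : qd s = ((Complex.normSq (d₁ s) + Complex.normSq (d₂ s)
        + Complex.normSq (d₃ s) : ℝ) : ℂ) := by
      rw [hqd]; push_cast; simp [Complex.normSq_eq_conj_mul_self]
    rw [h]; simp
  have hrreal : ∀ s, (((rd s).re : ℝ) : ℂ) = rd s := by
    intro s
    have h : rd s = ((3*(Complex.normSq (d₁ s) + Complex.normSq (d₂ s)
        + Complex.normSq (d₃ s)) - Complex.normSq (σd s) : ℝ) : ℂ) := by
      rw [hrd, hqd, hpd]; push_cast; simp [Complex.normSq_eq_conj_mul_self]; ring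
    rw [h]; simp
  set u : Fin n → ℝ := fun s => Real.sqrt ((qd s).re) with hud
  set v : Fin n → ℝ := fun s => Real.sqrt ((rd s).re) with hvd
  have hupos : ∀ s, 0 < u s := fun s => Real.sqrt_pos.2 (hq' s)
  have hvpos : ∀ s, 0 < v s := fun s => Real.sqrt_pos.2 (hp' s)
  have hu0 : ∀ s, ((u s : ℝ) : ℂ) ≠ 0 := fun s => by
    exact_mod_cast (hupos s).ne'
  have hv0 : ∀ s, ((v s : ℝ) : ℂ) ≠ 0 := fun s => by
    exact_mod_cast (hvpos s).ne'
  have hUs : ∀ s, ((u s : ℝ) : ℂ)^2 = qd s := by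
    intro s
    rw [hud, ← Complex.ofReal_pow, Real.sq_sqrt (hq' s).le, hqreal]
  have hVs : ∀ s, ((v s : ℝ) : ℂ)^2 = rd s := by
    intro s
    rw [hvd, ← Complex.ofReal_pow, Real.sq_sqrt (hp' s).le, hrreal]
  have hU' : ∀ s, ((u s : ℝ) : ℂ)^2 = starRingEnd ℂ (d₁ s) * d₁ s
      + starRingEnd ℂ (d₂ s) * d₂ s + starRingEnd ℂ (d₃ s) * d₃ s := by
    intro s; rw [hUs s, hqd]
  have hV' : ∀ s, ((v s : ℝ) : ℂ)^2 = 3*(starRingEnd ℂ (d₁ s) * d₁ s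
      + starRingEnd ℂ (d₂ s) * d₂ s + starRingEnd ℂ (d₃ s) * d₃ s)
      - (d₁ s + d₂ s + d₃ s)*(starRingEnd ℂ (d₁ s) + starRingEnd ℂ (d₂ s)
      + starRingEnd ℂ (d₃ s)) := by
    intro s; rw [hVs s, hrd, hqd, hpd, hσd]
    simp only [map_add]
    try ring
  have hqq : ∀ s, qd s = starRingEnd ℂ (d₁ s) * d₁ s + starRingEnd ℂ (d₂ s) * d₂ s
      + starRingEnd ℂ (d₃ s) * d₃ s := fun s => by rw [hqd]
  -- invSqrtDiag computations
  have hE0 : invSqrtDiag (Matrix.diagonal qd)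
      = Matrix.diagonal (fun s => ((u s : ℝ) : ℂ)⁻¹) := by
    unfold invSqrtDiag
    apply congrArg Matrix.diagonal
    funext s
    rw [Matrix.diagonal_apply_eq, hud]
    push_cast
    rfl
  have hE2 : invSqrtDiag (Matrix.diagonal rd)
      = Matrix.diagonal (fun s => ((v s : ℝ) : ℂ)⁻¹) := by
    unfold invSqrtDiag
    apply congrArg Matrix.diagonal
    funext s
    rw [Matrix.diagonal_apply_eq, hvd]
    push_cast
    rfl
  have hE1 : invSqrtDiag (Matrix.diagonal (fun s => rd s * qd s))
      = Matrix.diagonal (fun s => (((v s : ℝ) : ℂ) * ((u s : ℝ) : ℂ))⁻¹) := by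
    unfold invSqrtDiag
    apply congrArg Matrix.diagonal
    funext s
    rw [Matrix.diagonal_apply_eq]
    have hre : (rd s * qd s).re = (rd s).re * (qd s).re := by
      rw [← hrreal s, ← hqreal s]
      push_cast
      simp
    rw [hre, Real.sqrt_mul (hp' s).le, hud, hvd]
    push_cast
    rfl
  rw [hE0, hE1, hE2]
  -- Q representation
  have hQgen : ∀ (A₁ A₂ A₃ B₁ B₂ B₃ G₁ G₂ G₃ E₁ E₂ E₃ : Matrix (Fin n) (Fin n) ℂ),
      hstack3 (((1 : Matrix (Fin 3) (Fin 3) ℂ) ⊗ₖ T) * stack3 A₁ A₂ A₃ * E₁)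
        (((1 : Matrix (Fin 3) (Fin 3) ℂ) ⊗ₖ T) * stack3 B₁ B₂ B₃ * E₂)
        (((1 : Matrix (Fin 3) (Fin 3) ℂ) ⊗ₖ T) * stack3 G₁ G₂ G₃ * E₃)
      = blk (fun i j =>
          if j = 0 then T * ((if i = 0 then A₁ else if i = 1 then A₂ else A₃) * E₁)
          else if j = 1 then T * ((if i = 0 then B₁ else if i = 1 then B₂ else B₃) * E₂)
          else T * ((if i = 0 then G₁ else if i = 1 then G₂ else G₃) * E₃)) := by
    intros A₁ A₂ A₃ B₁ B₂ B₃ G₁ G₂ G₃ E₁ E₂ E₃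
    rw [kron_mul_stack3, kron_mul_stack3, kron_mul_stack3,
      stack3_mulR, stack3_mulR, stack3_mulR, hstack3_stack_blk]
    exact blk_congr fun i j => by split_ifs <;> simp [Matrix.mul_assoc]
  rw [hQgen]
  -- the blk function equals md
  have hFd : blk (fun i j =>
      if j = 0 then T * ((if i = 0 then Matrix.diagonal qd - Matrix.diagonal d₁ * (Matrix.diagonal σd)ᴴ
          else if i = 1 then Matrix.diagonal qd - Matrix.diagonal d₂ * (Matrix.diagonal σd)ᴴ
          else Matrix.diagonal qd - Matrix.diagonal d₃ * (Matrix.diagonal σd)ᴴ)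
        * Matrix.diagonal (fun s => (((v s : ℝ) : ℂ) * ((u s : ℝ) : ℂ))⁻¹))
      else if j = 1 then T * ((if i = 0 then (Matrix.diagonal d₃)ᴴ - (Matrix.diagonal d₂)ᴴ
          else if i = 1 then (Matrix.diagonal d₁)ᴴ - (Matrix.diagonal d₃)ᴴ
          else (Matrix.diagonal d₂)ᴴ - (Matrix.diagonal d₁)ᴴ)
        * Matrix.diagonal (fun s => ((v s : ℝ) : ℂ)⁻¹))
      else T * ((if i = 0 then Matrix.diagonal d₁ else if i = 1 then Matrix.diagonal d₂
          else Matrix.diagonal d₃)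
        * Matrix.diagonal (fun s => ((u s : ℝ) : ℂ)⁻¹)))
      = blk (md T d₁ d₂ d₃ u v) := by
    refine blk_congr fun i j => ?_
    fin_cases i <;> fin_cases j <;>
      simp only [show ((⟨0, by omega⟩ : Fin 3)) = 0 from rfl,
        show ((⟨1, by omega⟩ : Fin 3)) = 1 from rfl,
        show ((⟨2, by omega⟩ : Fin 3)) = 2 from rfl] <;>
      simp only [md, show ((0:Fin 3) = 0) = True by simp, show ((1:Fin 3) = 0) = False by simp,
        show ((2:Fin 3) = 0) = False by simp, show ((0:Fin 3) = 1) = False by simp,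
        show ((1:Fin 3) = 1) = True by simp, show ((2:Fin 3) = 1) = False by simp,
        show ((0:Fin 3) = 2) = False by simp, show ((1:Fin 3) = 2) = False by simp,
        show ((2:Fin 3) = 2) = True by simp, if_true, if_false] <;>
      (apply congrArg (T * ·)) <;>
      simp only [Matrix.diagonal_conjTranspose, Matrix.diagonal_mul_diagonal,
        Matrix.diagonal_sub] <;>
      (apply congrArg Matrix.diagonal) <;>
      (funext s) <;>
      simp [m3, hqd, hσd, Complex.star_def, map_add, Pi.sub_apply, Pi.mul_apply,
        Pi.star_apply] <;>
      ring
  rw [hFd]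
  -- curl representation
  have hC1 : C₁ = T * Matrix.diagonal d₁ * Tᴴ := by
    rw [← h₁, Matrix.mul_assoc, hT', Matrix.mul_one]
  have hC2 : C₂ = T * Matrix.diagonal d₂ * Tᴴ := by
    rw [← h₂, Matrix.mul_assoc, hT', Matrix.mul_one]
  have hC3 : C₃ = T * Matrix.diagonal d₃ * Tᴴ := by
    rw [← h₃, Matrix.mul_assoc, hT', Matrix.mul_one]
  rw [curl_blk]
  have hneg : ∀ (d : Fin n → ℂ), (Matrix.diagonal fun s => -(d s)) = -Matrix.diagonal d :=
    fun d => (Matrix.diagonal_neg d).symm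
  have hKB : blk (fun i j =>
      if i = 0 ∧ j = 1 then -C₃
      else if i = 0 ∧ j = 2 then C₂
      else if i = 1 ∧ j = 0 then C₃
      else if i = 1 ∧ j = 2 then -C₁
      else if i = 2 ∧ j = 0 then -C₂
      else if i = 2 ∧ j = 1 then C₁
      else 0) = blk (fun i j => T * kd d₁ d₂ d₃ i j * Tᴴ) := by
    refine blk_congr fun i j => ?_
    fin_cases i <;> fin_cases j <;>
      simp only [show ((⟨0, by omega⟩ : Fin 3)) = 0 from rfl,
        show ((⟨1, by omega⟩ : Fin 3)) = 1 from rfl,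
        show ((⟨2, by omega⟩ : Fin 3)) = 2 from rfl] <;>
      simp [kd, k3, hC1, hC2, hC3, Matrix.mul_neg, Matrix.neg_mul,
        Matrix.mul_zero, Matrix.zero_mul,
        hneg, -Matrix.diagonal_neg]
  rw [hKB]
  rw [blockdiag3_blk]
  have hDB : blk (fun i j => if i = j then
      (if i = 0 then Matrix.diagonal qd else if i = 1 then Matrix.diagonal qd else 0) else 0)
      = blk (dbf qd) := rfl
  rw [hDB]
  have h1 := bigQ T d₁ d₂ d₃ u v hT hu0 hv0 hU' hV'
  exact ⟨h1, mul_eq_one_comm.mp h1,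
    bigC T d₁ d₂ d₃ u v qd hT hu0 hv0 hU' hV' hqq⟩
end

section
/- Assume the diagonal matrices Λq and 3Λq − Λp are invertible. Define Q₀, Q₁, Q₂ and Q = [Q₁, Q₂, Q₀] as in the eigen-decomposition of C*C, and define P₂ := (I₃⊗T)[Λ₂−Λ₃; Λ₃−Λ₁; Λ₁−Λ₂]·(3Λq−Λp)^{−1/2}, P₁ := (I₃⊗T)[Λq−Λ₁*Λs; Λq−Λ₂*Λs; Λq−Λ₃*Λs]·((3Λq−Λp)Λq)^{−1/2}, P₀ := (I₃⊗T)[Λ₁*; Λ₂*; Λ₃*]·Λq^{−1/2}, and P := [P₂, P₁, P₀] ∈ ℂ^{3n×3n}. Then P is unitary and C = P · blockdiag(Λq^{1/2}, Λq^{1/2}, 0) · Q*; equivalently, C = P_r Σ_r Q_r* with P_r = [P₂, P₁], Q_r = [Q₁, Q₂] and Σ_r = blockdiag(Λq^{1/2}, Λq^{1/2}). (Section 5.1, the singular value decomposition of the discrete single-curl operator C.) -/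
open Matrix Kronecker

/-- Horizontally concatenated `3n × 2n` matrix `[A, B]` from two `3n × n` blocks. -/
def hstack2 {n : ℕ} (A B : Matrix (Fin 3 × Fin n) (Fin n) ℂ) :
    Matrix (Fin 3 × Fin n) (Fin 2 × Fin n) ℂ :=
  Matrix.of fun p q => if q.1 = 0 then A p q.2 else B p q.2

/-- The `2n × 2n` block diagonal matrix `blockdiag(A, A)`. -/
def blockdiag2 {n : ℕ} (A : Matrix (Fin n) (Fin n) ℂ) :
    Matrix (Fin 2 × Fin n) (Fin 2 × Fin n) ℂ :=
  Matrix.of fun p q => if p.1 = q.1 then A p.2 q.2 else 0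

/-- For a diagonal matrix `D` with nonnegative real diagonal entries, the diagonal
matrix `D^{1/2}` of square roots of its entries. -/
noncomputable def sqrtDiag {n : ℕ} (D : Matrix (Fin n) (Fin n) ℂ) :
    Matrix (Fin n) (Fin n) ℂ :=
  Matrix.diagonal fun s => ((Real.sqrt ((D s s).re) : ℝ) : ℂ)

/-! ### Auxiliary block-matrix machinery -/

section blk
variable {m : ℕ} {a b c : Type*}

/-- block matrix from a function of block indices. -/
def blkG (f : a → b → Matrix (Fin m) (Fin m) ℂ) :
    Matrix (a × Fin m) (b × Fin m) ℂ := Matrix.of fun p q => f p.1 q.1 p.2 q.2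

/-- column block matrix. -/
def colG (f : a → Matrix (Fin m) (Fin m) ℂ) :
    Matrix (a × Fin m) (Fin m) ℂ := Matrix.of fun p t => f p.1 p.2 t

lemma blkG_mul [Fintype b] (f : a → b → Matrix (Fin m) (Fin m) ℂ)
    (g : b → c → Matrix (Fin m) (Fin m) ℂ) :
    blkG f * blkG g = blkG (fun i j => ∑ k, f i k * g k j) := by
  ext p q
  simp [blkG, Matrix.mul_apply, Fintype.sum_prod_type, Matrix.sum_apply]

lemma colG_mul (f : a → Matrix (Fin m) (Fin m) ℂ) (M : Matrix (Fin m) (Fin m) ℂ) :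
    colG f * M = colG (fun i => f i * M) := by
  ext p t
  simp [colG, Matrix.mul_apply]

lemma blkG_conjT (f : a → b → Matrix (Fin m) (Fin m) ℂ) :
    (blkG f)ᴴ = blkG (fun i j => (f j i)ᴴ) := by
  ext p q
  simp [blkG, Matrix.conjTranspose_apply]

lemma blkG_one [DecidableEq a] [Fintype a] :
    (1 : Matrix (a × Fin m) (a × Fin m) ℂ)
      = blkG (fun i j => if i = j then 1 else 0) := by
  ext p q
  by_cases h : p.1 = q.1 <;>
    simp [blkG, Matrix.one_apply, Prod.ext_iff, h]

lemma blkG_congr (f g : a → b → Matrix (Fin m) (Fin m) ℂ) (h : ∀ i j, f i j = g i j) :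
    blkG f = blkG g := by
  ext p q; rw [blkG, blkG]; simp [h p.1 q.1]

end blk

section conv
variable {n : ℕ}

lemma kron_eq_blkG (T : Matrix (Fin n) (Fin n) ℂ) :
    ((1 : Matrix (Fin 3) (Fin 3) ℂ) ⊗ₖ T)
      = blkG (fun i j => if i = j then T else 0) := by
  ext p q
  simp [blkG, Matrix.kroneckerMap_apply, Matrix.one_apply, ite_mul,
    apply_ite (fun M : Matrix (Fin n) (Fin n) ℂ => M p.2 q.2)]

lemma stack3_eq_colG (A B C : Matrix (Fin n) (Fin n) ℂ) :
    stack3 A B C = colG (fun i => if i = 0 then A else if i = 1 then B else C) := by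
  ext p t
  rcases p with ⟨i, k⟩
  fin_cases i <;> simp [stack3, colG]

lemma hstack3_colG (f g h : Fin 3 → Matrix (Fin n) (Fin n) ℂ) :
    hstack3 (colG f) (colG g) (colG h)
      = blkG (fun i j => if j = 0 then f i else if j = 1 then g i else h i) := by
  ext p q
  rcases q with ⟨j, t⟩
  fin_cases j <;> simp [hstack3, colG, blkG]

lemma hstack2_colG (f g : Fin 3 → Matrix (Fin n) (Fin n) ℂ) :
    hstack2 (colG f) (colG g)
      = blkG (fun i (j : Fin 2) => if j = 0 then f i else g i) := by
  ext p q
  rcases q with ⟨j, t⟩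
  fin_cases j <;> simp [hstack2, colG, blkG]

lemma mul_hstack3 (M : Matrix (Fin 3 × Fin n) (Fin 3 × Fin n) ℂ)
    (X Y Z : Matrix (Fin 3 × Fin n) (Fin n) ℂ) :
    hstack3 (M * X) (M * Y) (M * Z) = M * hstack3 X Y Z := by
  ext p q
  rcases q with ⟨j, t⟩
  fin_cases j <;> simp [hstack3, Matrix.mul_apply]

lemma mul_hstack2 (M : Matrix (Fin 3 × Fin n) (Fin 3 × Fin n) ℂ)
    (X Y : Matrix (Fin 3 × Fin n) (Fin n) ℂ) :
    hstack2 (M * X) (M * Y) = M * hstack2 X Y := by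
  ext p q
  rcases q with ⟨j, t⟩
  fin_cases j <;> simp [hstack2, Matrix.mul_apply]

lemma blockdiag3_blkG (A B : Matrix (Fin n) (Fin n) ℂ) :
    blockdiag3 A B
      = blkG (fun i j => if i = j then (if i = 0 then A else if i = 1 then B else 0) else 0) := by
  ext p q
  simp [blockdiag3, blkG, apply_ite (fun M : Matrix (Fin n) (Fin n) ℂ => M p.2 q.2)]

lemma blockdiag2_blkG (A : Matrix (Fin n) (Fin n) ℂ) :
    blockdiag2 A = blkG (fun i j : Fin 2 => if i = j then A else 0) := by
  ext p q
  simp [blockdiag2, blkG, apply_ite (fun M : Matrix (Fin n) (Fin n) ℂ => M p.2 q.2)]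

lemma curlMat_blkG (X Y Z : Matrix (Fin n) (Fin n) ℂ) :
    curlMat X Y Z = blkG (fun i j =>
      if i = 0 ∧ j = 1 then -Z
      else if i = 0 ∧ j = 2 then Y
      else if i = 1 ∧ j = 0 then Z
      else if i = 1 ∧ j = 2 then -X
      else if i = 2 ∧ j = 0 then -Y
      else if i = 2 ∧ j = 1 then X
      else 0) := by
  ext p q
  simp [curlMat, blkG, apply_ite (fun M : Matrix (Fin n) (Fin n) ℂ => M p.2 q.2)]

lemma dblk_mul {c : Type*} (T : Matrix (Fin n) (Fin n) ℂ)
    (f : Fin 3 → c → Matrix (Fin n) (Fin n) ℂ) :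
    blkG (fun i j : Fin 3 => if i = j then T else 0) * blkG f
      = blkG (fun i j => T * f i j) := by
  rw [blkG_mul]
  apply blkG_congr
  intro i j
  simp [ite_mul, Finset.sum_ite_eq]

lemma mul_dblkH {a : Type*} (T : Matrix (Fin n) (Fin n) ℂ)
    (f : a → Fin 3 → Matrix (Fin n) (Fin n) ℂ) :
    blkG f * (blkG (fun i j : Fin 3 => if i = j then T else 0))ᴴ
      = blkG (fun i j => f i j * Tᴴ) := by
  rw [blkG_conjT, blkG_mul]
  apply blkG_congr
  intro i j
  simp [apply_ite (conjTranspose), mul_ite, Finset.sum_ite_eq']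

lemma dblkH_mul_dblk (T : Matrix (Fin n) (Fin n) ℂ) (hT : Tᴴ * T = 1) :
    (blkG (fun i j : Fin 3 => if i = j then T else 0))ᴴ
      * blkG (fun i j : Fin 3 => if i = j then T else 0) = 1 := by
  rw [blkG_conjT, blkG_mul, blkG_one]
  apply blkG_congr
  intro i j
  by_cases h : i = j
  · subst h
    simp [apply_ite (conjTranspose), ite_mul, mul_ite, Finset.sum_ite_eq, hT]
  · simp only [apply_ite (conjTranspose), Matrix.conjTranspose_zero, ite_mul, mul_ite,
      Matrix.zero_mul, Matrix.mul_zero, Finset.sum_ite_eq, Finset.mem_univ, if_true]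
    rw [if_neg h]
    apply Finset.sum_eq_zero
    intro k _
    by_cases hk : k = j
    · subst hk
      rw [if_pos rfl, if_neg (show ¬ k = i from fun h' => h h'.symm)]
    · simp [hk]

end conv

/-! ### Scalar level -/

open Complex ComplexConjugate in
/-- scalar entries of the `P` factor: column `j` (`0 ↦ P₂`, `1 ↦ P₁`, `2 ↦ P₀`), row `i`. -/
noncomputable def pcol (A B C : ℂ) (x y : ℝ) (i j : Fin 3) : ℂ :=
  if j = 0 then
    (if i = 0 then B - C else if i = 1 then C - A else A - B) * (y:ℂ)⁻¹
  else if j = 1 then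
    ((star A*A + star B*B + star C*C)
        - star (if i = 0 then A else if i = 1 then B else C) * (A+B+C)) * ((y:ℂ) * x)⁻¹
  else star (if i = 0 then A else if i = 1 then B else C) * (x:ℂ)⁻¹

/-- scalar entries of the `Q` factor: column `j` (`0 ↦ Q₁`, `1 ↦ Q₂`, `2 ↦ Q₀`), row `i`. -/
noncomputable def qcol (A B C : ℂ) (x y : ℝ) (i j : Fin 3) : ℂ :=
  if j = 0 then
    ((star A*A + star B*B + star C*C)
        - (if i = 0 then A else if i = 1 then B else C) * star (A+B+C)) * ((y:ℂ) * x)⁻¹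
  else if j = 1 then
    (star (if i = 0 then C else if i = 1 then A else B)
      - star (if i = 0 then B else if i = 1 then C else A)) * (y:ℂ)⁻¹
  else (if i = 0 then A else if i = 1 then B else C) * (x:ℂ)⁻¹

/-- scalar entries of the curl. -/
def curlE (A B C : ℂ) (i j : Fin 3) : ℂ :=
  if i = 0 ∧ j = 1 then -C
  else if i = 0 ∧ j = 2 then B
  else if i = 1 ∧ j = 0 then C
  else if i = 1 ∧ j = 2 then -A
  else if i = 2 ∧ j = 0 then -B
  else if i = 2 ∧ j = 1 then A
  else 0

section scalar
variable (A B C : ℂ) (x y : ℝ)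

set_option maxHeartbeats 1000000 in
lemma scalarPP (hx : (x:ℂ)*x = star A*A + star B*B + star C*C)
    (hy : (y:ℂ)*y = 3*(star A*A + star B*B + star C*C) - (A+B+C)*star (A+B+C))
    (hx0 : (x:ℂ) ≠ 0) (hy0 : (y:ℂ) ≠ 0) (i j : Fin 3) :
    star (pcol A B C x y 0 i) * pcol A B C x y 0 j
      + star (pcol A B C x y 1 i) * pcol A B C x y 1 j
      + star (pcol A B C x y 2 i) * pcol A B C x y 2 j
      = if i = j then 1 else 0 := by
  simp only [Complex.star_def, _root_.map_add, _root_.map_sub, _root_.map_mul, _root_.map_inv₀, Complex.conj_ofReal,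
    Complex.conj_conj] at hx hy
  fin_cases i <;> fin_cases j <;>
    simp [pcol, Complex.star_def, _root_.map_add, _root_.map_sub, _root_.map_mul, _root_.map_inv₀, Complex.conj_ofReal,
      Complex.conj_conj] <;>
    [ (field_simp; linear_combination -hy);
      (field_simp; ring);
      (field_simp; ring);
      (field_simp; ring);
      (field_simp; linear_combination (-(3*((starRingEnd ℂ) A*A + (starRingEnd ℂ) B*B
          + (starRingEnd ℂ) C*C))
          + (A+B+C)*((starRingEnd ℂ) A + (starRingEnd ℂ) B + (starRingEnd ℂ) C))*hx
          - ((x:ℂ)*x)*hy);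
      (field_simp; ring);
      (field_simp; ring);
      (field_simp; ring);
      (field_simp; linear_combination -hx)]

set_option maxHeartbeats 1000000 in
lemma scalarSVD (hx : (x:ℂ)*x = star A*A + star B*B + star C*C)
    (hy : (y:ℂ)*y = 3*(star A*A + star B*B + star C*C) - (A+B+C)*star (A+B+C))
    (hx0 : (x:ℂ) ≠ 0) (hy0 : (y:ℂ) ≠ 0) (i j : Fin 3) :
    pcol A B C x y i 0 * (x:ℂ) * star (qcol A B C x y j 0)
      + pcol A B C x y i 1 * (x:ℂ) * star (qcol A B C x y j 1)
      = curlE A B C i j := by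
  simp only [Complex.star_def, _root_.map_add, _root_.map_sub, _root_.map_mul, _root_.map_inv₀, Complex.conj_ofReal,
    Complex.conj_conj] at hx hy
  fin_cases i <;> fin_cases j <;>
    simp [pcol, qcol, curlE, Complex.star_def, _root_.map_add, _root_.map_sub, _root_.map_mul, _root_.map_inv₀,
      Complex.conj_ofReal, Complex.conj_conj] <;>
    [ (field_simp; ring);
      (field_simp; linear_combination C*hy);
      (field_simp; linear_combination -B*hy);
      (field_simp; linear_combination -C*hy);
      (field_simp; ring);
      (field_simp; linear_combination A*hy);
      (field_simp; linear_combination B*hy);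
      (field_simp; linear_combination -A*hy);
      (field_simp; ring)]

end scalar

set_option maxHeartbeats 4000000 in
/-- Section 5.1: the singular value decomposition of the discrete single-curl
operator: `P = [P₂, P₁, P₀]` is unitary and `C = P blockdiag(Λq^{1/2}, Λq^{1/2}, 0) Q*`;
equivalently `C = P_r Σ_r Q_r*` with `P_r = [P₂, P₁]`, `Q_r = [Q₁, Q₂]`,
`Σ_r = blockdiag(Λq^{1/2}, Λq^{1/2})`. -/
theorem stmt_16 (n : ℕ) (hn : 1 ≤ n)
    (T Λ₁ Λ₂ Λ₃ C₁ C₂ C₃ : Matrix (Fin n) (Fin n) ℂ)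
    (hT : Tᴴ * T = 1) (hT' : T * Tᴴ = 1)
    (hΛ₁ : Λ₁.IsDiag) (hΛ₂ : Λ₂.IsDiag) (hΛ₃ : Λ₃.IsDiag)
    (h₁ : C₁ * T = T * Λ₁) (h₂ : C₂ * T = T * Λ₂) (h₃ : C₃ * T = T * Λ₃)
    (Λq Λs Λp : Matrix (Fin n) (Fin n) ℂ)
    (hΛq : Λq = Λ₁ᴴ * Λ₁ + Λ₂ᴴ * Λ₂ + Λ₃ᴴ * Λ₃)
    (hΛs : Λs = Λ₁ + Λ₂ + Λ₃)
    (hΛp : Λp = Λs * Λsᴴ)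
    (hq : ∀ s, 0 < (Λq s s).re)
    (hp : ∀ s, 0 < ((((3 : ℂ) • Λq - Λp)) s s).re)
    (Q₀ Q₁ Q₂ P₀ P₁ P₂ : Matrix (Fin 3 × Fin n) (Fin n) ℂ)
    (hQ₀ : Q₀ = ((1 : Matrix (Fin 3) (Fin 3) ℂ) ⊗ₖ T) * stack3 Λ₁ Λ₂ Λ₃ * invSqrtDiag Λq)
    (hQ₁ : Q₁ = ((1 : Matrix (Fin 3) (Fin 3) ℂ) ⊗ₖ T)
      * stack3 (Λq - Λ₁ * Λsᴴ) (Λq - Λ₂ * Λsᴴ) (Λq - Λ₃ * Λsᴴ)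
      * invSqrtDiag (((3 : ℂ) • Λq - Λp) * Λq))
    (hQ₂ : Q₂ = ((1 : Matrix (Fin 3) (Fin 3) ℂ) ⊗ₖ T)
      * stack3 (Λ₃ᴴ - Λ₂ᴴ) (Λ₁ᴴ - Λ₃ᴴ) (Λ₂ᴴ - Λ₁ᴴ)
      * invSqrtDiag ((3 : ℂ) • Λq - Λp))
    (hP₀ : P₀ = ((1 : Matrix (Fin 3) (Fin 3) ℂ) ⊗ₖ T) * stack3 Λ₁ᴴ Λ₂ᴴ Λ₃ᴴ * invSqrtDiag Λq)
    (hP₁ : P₁ = ((1 : Matrix (Fin 3) (Fin 3) ℂ) ⊗ₖ T)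
      * stack3 (Λq - Λ₁ᴴ * Λs) (Λq - Λ₂ᴴ * Λs) (Λq - Λ₃ᴴ * Λs)
      * invSqrtDiag (((3 : ℂ) • Λq - Λp) * Λq))
    (hP₂ : P₂ = ((1 : Matrix (Fin 3) (Fin 3) ℂ) ⊗ₖ T)
      * stack3 (Λ₂ - Λ₃) (Λ₃ - Λ₁) (Λ₁ - Λ₂)
      * invSqrtDiag ((3 : ℂ) • Λq - Λp))
    (Q P : Matrix (Fin 3 × Fin n) (Fin 3 × Fin n) ℂ)
    (hQ : Q = hstack3 Q₁ Q₂ Q₀) (hP : P = hstack3 P₂ P₁ P₀) :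
    Pᴴ * P = 1 ∧ P * Pᴴ = 1 ∧
    curlMat C₁ C₂ C₃ = P * blockdiag3 (sqrtDiag Λq) (sqrtDiag Λq) * Qᴴ ∧
    curlMat C₁ C₂ C₃
      = hstack2 P₂ P₁ * blockdiag2 (sqrtDiag Λq) * (hstack2 Q₁ Q₂)ᴴ := by
  classical
  -- the eigenvalue functions
  set a : Fin n → ℂ := Λ₁.diag with ha
  set b : Fin n → ℂ := Λ₂.diag with hb
  set c : Fin n → ℂ := Λ₃.diag with hc
  have hd1 : Λ₁ = Matrix.diagonal a := (hΛ₁.diagonal_diag).symm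
  have hd2 : Λ₂ = Matrix.diagonal b := (hΛ₂.diagonal_diag).symm
  have hd3 : Λ₃ = Matrix.diagonal c := (hΛ₃.diagonal_diag).symm
  have hC1 : C₁ = T * Λ₁ * Tᴴ := by
    calc C₁ = C₁ * (T * Tᴴ) := by rw [hT', mul_one]
    _ = C₁ * T * Tᴴ := by rw [Matrix.mul_assoc]
    _ = T * Λ₁ * Tᴴ := by rw [h₁]
  have hC2 : C₂ = T * Λ₂ * Tᴴ := by
    calc C₂ = C₂ * (T * Tᴴ) := by rw [hT', mul_one]
    _ = C₂ * T * Tᴴ := by rw [Matrix.mul_assoc]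
    _ = T * Λ₂ * Tᴴ := by rw [h₂]
  have hC3 : C₃ = T * Λ₃ * Tᴴ := by
    calc C₃ = C₃ * (T * Tᴴ) := by rw [hT', mul_one]
    _ = C₃ * T * Tᴴ := by rw [Matrix.mul_assoc]
    _ = T * Λ₃ * Tᴴ := by rw [h₃]
  -- diagonal forms
  have hΛqd : Λq = Matrix.diagonal
      (fun s => star (a s) * a s + star (b s) * b s + star (c s) * c s) := by
    rw [hΛq, hd1, hd2, hd3]
    simp only [Matrix.diagonal_conjTranspose, Matrix.diagonal_mul_diagonal,
      Matrix.diagonal_add]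
    congr 1
  have hΛsd : Λs = Matrix.diagonal (fun s => a s + b s + c s) := by
    rw [hΛs, hd1, hd2, hd3]
    simp only [Matrix.diagonal_add]
  have hΛpd : Λp = Matrix.diagonal
      (fun s => (a s + b s + c s) * star (a s + b s + c s)) := by
    rw [hΛp, hΛsd]
    simp only [Matrix.diagonal_conjTranspose, Matrix.diagonal_mul_diagonal]
    congr 1
  have hDd : (3 : ℂ) • Λq - Λp = Matrix.diagonal
      (fun s => 3 * (star (a s) * a s + star (b s) * b s + star (c s) * c s)
        - (a s + b s + c s) * star (a s + b s + c s)) := by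
    rw [hΛqd, hΛpd]
    rw [← Matrix.diagonal_smul, Matrix.diagonal_sub]
    congr 1
  -- positivity and realness
  have hqpos : ∀ s, 0 < (star (a s) * a s + star (b s) * b s + star (c s) * c s).re := by
    intro s
    have := hq s
    rwa [hΛqd, Matrix.diagonal_apply_eq] at this
  have hdpos : ∀ s,
      0 < (3 * (star (a s) * a s + star (b s) * b s + star (c s) * c s)
        - (a s + b s + c s) * star (a s + b s + c s)).re := by
    intro s
    have := hp s
    rwa [hDd, Matrix.diagonal_apply_eq] at this
  have hqim : ∀ s, (star (a s) * a s + star (b s) * b s + star (c s) * c s).im = 0 := by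
    intro s
    simp [Complex.star_def, ← Complex.normSq_eq_conj_mul_self]
  have hdim : ∀ s, (3 * (star (a s) * a s + star (b s) * b s + star (c s) * c s)
      - (a s + b s + c s) * star (a s + b s + c s)).im = 0 := by
    intro s
    simp [Complex.star_def, ← Complex.normSq_eq_conj_mul_self, Complex.mul_conj]
    ring
  -- square roots
  set x : Fin n → ℝ :=
    fun s => Real.sqrt ((star (a s) * a s + star (b s) * b s + star (c s) * c s).re) with hxdef
  set yv : Fin n → ℝ :=
    fun s => Real.sqrt ((3 * (star (a s) * a s + star (b s) * b s + star (c s) * c s)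
      - (a s + b s + c s) * star (a s + b s + c s)).re) with hyvdef
  have hxx : ∀ s, (x s : ℂ) * x s
      = star (a s) * a s + star (b s) * b s + star (c s) * c s := by
    intro s
    rw [← Complex.ofReal_mul, Real.mul_self_sqrt (hqpos s).le]
    apply Complex.ext
    · simp only [Complex.ofReal_re]
    · simp only [Complex.ofReal_im]
      exact (hqim s).symm
  have hyy : ∀ s, (yv s : ℂ) * yv s
      = 3 * (star (a s) * a s + star (b s) * b s + star (c s) * c s)
        - (a s + b s + c s) * star (a s + b s + c s) := by
    intro s
    rw [← Complex.ofReal_mul, Real.mul_self_sqrt (hdpos s).le]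
    apply Complex.ext
    · simp only [Complex.ofReal_re]
    · simp only [Complex.ofReal_im]
      exact (hdim s).symm
  have hx0 : ∀ s, (x s : ℂ) ≠ 0 := by
    intro s
    exact Complex.ofReal_ne_zero.mpr (Real.sqrt_pos.2 (hqpos s)).ne'
  have hy0 : ∀ s, (yv s : ℂ) ≠ 0 := by
    intro s
    exact Complex.ofReal_ne_zero.mpr (Real.sqrt_pos.2 (hdpos s)).ne'
  -- inverse square root matrices
  have hiQ : invSqrtDiag Λq = Matrix.diagonal (fun s => ((x s : ℂ))⁻¹) := by
    rw [hΛqd]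
    unfold invSqrtDiag
    apply congrArg Matrix.diagonal
    funext s
    simp only [Matrix.diagonal_apply_eq]
    push_cast
    rfl
  have hiD : invSqrtDiag ((3 : ℂ) • Λq - Λp)
      = Matrix.diagonal (fun s => ((yv s : ℂ))⁻¹) := by
    rw [hDd]
    unfold invSqrtDiag
    apply congrArg Matrix.diagonal
    funext s
    simp only [Matrix.diagonal_apply_eq]
    push_cast
    rfl
  have hiDQ : invSqrtDiag (((3 : ℂ) • Λq - Λp) * Λq)
      = Matrix.diagonal (fun s => ((yv s : ℂ) * x s)⁻¹) := by
    rw [hDd, hΛqd, Matrix.diagonal_mul_diagonal]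
    unfold invSqrtDiag
    apply congrArg Matrix.diagonal
    funext s
    simp only [Matrix.diagonal_apply_eq]
    have hre : ((3 * (star (a s) * a s + star (b s) * b s + star (c s) * c s)
        - (a s + b s + c s) * star (a s + b s + c s))
        * (star (a s) * a s + star (b s) * b s + star (c s) * c s)).re
        = (3 * (star (a s) * a s + star (b s) * b s + star (c s) * c s)
        - (a s + b s + c s) * star (a s + b s + c s)).re
        * (star (a s) * a s + star (b s) * b s + star (c s) * c s).re := by
      rw [Complex.mul_re, hdim s, hqim s]
      ring
    rw [hre, Real.sqrt_mul (hdpos s).le]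
    push_cast
    rw [mul_inv]
  have hsQ : sqrtDiag Λq = Matrix.diagonal (fun s => ((x s : ℂ))) := by
    rw [hΛqd]
    unfold sqrtDiag
    apply congrArg Matrix.diagonal
    funext s
    simp only [Matrix.diagonal_apply_eq]
    rfl
  -- the unitary block-diagonal factor
  set 𝕋 : Matrix (Fin 3 × Fin n) (Fin 3 × Fin n) ℂ :=
    blkG (fun i j : Fin 3 => if i = j then T else 0) with hTTdef
  have h𝕋u : 𝕋ᴴ * 𝕋 = 1 := dblkH_mul_dblk T hT
  -- block forms of P and Q
  set gP : Fin 3 → Fin 3 → Matrix (Fin n) (Fin n) ℂ :=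
    fun i j => Matrix.diagonal (fun s => pcol (a s) (b s) (c s) (x s) (yv s) i j) with hgP
  set gQ : Fin 3 → Fin 3 → Matrix (Fin n) (Fin n) ℂ :=
    fun i j => Matrix.diagonal (fun s => qcol (a s) (b s) (c s) (x s) (yv s) i j) with hgQ
  set gC : Fin 3 → Fin 3 → Matrix (Fin n) (Fin n) ℂ :=
    fun i j => Matrix.diagonal (fun s => curlE (a s) (b s) (c s) i j) with hgC
  have hQ₁' : Q₁ = 𝕋 * colG (fun i : Fin 3 =>
      (if i = 0 then Λq - Λ₁ * Λsᴴ else if i = 1 then Λq - Λ₂ * Λsᴴ else Λq - Λ₃ * Λsᴴ)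
        * invSqrtDiag (((3 : ℂ) • Λq - Λp) * Λq)) := by
    rw [hQ₁, kron_eq_blkG, stack3_eq_colG, Matrix.mul_assoc, colG_mul]
  have hQ₂' : Q₂ = 𝕋 * colG (fun i : Fin 3 =>
      (if i = 0 then Λ₃ᴴ - Λ₂ᴴ else if i = 1 then Λ₁ᴴ - Λ₃ᴴ else Λ₂ᴴ - Λ₁ᴴ)
        * invSqrtDiag ((3 : ℂ) • Λq - Λp)) := by
    rw [hQ₂, kron_eq_blkG, stack3_eq_colG, Matrix.mul_assoc, colG_mul]
  have hQ₀' : Q₀ = 𝕋 * colG (fun i : Fin 3 =>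
      (if i = 0 then Λ₁ else if i = 1 then Λ₂ else Λ₃) * invSqrtDiag Λq) := by
    rw [hQ₀, kron_eq_blkG, stack3_eq_colG, Matrix.mul_assoc, colG_mul]
  have hP₂' : P₂ = 𝕋 * colG (fun i : Fin 3 =>
      (if i = 0 then Λ₂ - Λ₃ else if i = 1 then Λ₃ - Λ₁ else Λ₁ - Λ₂)
        * invSqrtDiag ((3 : ℂ) • Λq - Λp)) := by
    rw [hP₂, kron_eq_blkG, stack3_eq_colG, Matrix.mul_assoc, colG_mul]
  have hP₁' : P₁ = 𝕋 * colG (fun i : Fin 3 =>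
      (if i = 0 then Λq - Λ₁ᴴ * Λs else if i = 1 then Λq - Λ₂ᴴ * Λs else Λq - Λ₃ᴴ * Λs)
        * invSqrtDiag (((3 : ℂ) • Λq - Λp) * Λq)) := by
    rw [hP₁, kron_eq_blkG, stack3_eq_colG, Matrix.mul_assoc, colG_mul]
  have hP₀' : P₀ = 𝕋 * colG (fun i : Fin 3 =>
      (if i = 0 then Λ₁ᴴ else if i = 1 then Λ₂ᴴ else Λ₃ᴴ) * invSqrtDiag Λq) := by
    rw [hP₀, kron_eq_blkG, stack3_eq_colG, Matrix.mul_assoc, colG_mul]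
  have hPblk : P = 𝕋 * blkG gP := by
    rw [hP, hP₂', hP₁', hP₀', mul_hstack3, hstack3_colG]
    congr 1
    apply blkG_congr
    intro i j
    fin_cases i <;> fin_cases j <;>
      (simp only [hgP]; simp only [hiQ, hiD, hiDQ];
       simp [hd1, hd2, hd3, hΛqd, hΛsd, Matrix.diagonal_conjTranspose,
         Matrix.diagonal_mul_diagonal, Matrix.diagonal_sub]) <;>
      (intro s) <;>
      (simp [pcol, Complex.star_def]; try ring)
  have hQblk : Q = 𝕋 * blkG gQ := by
    rw [hQ, hQ₁', hQ₂', hQ₀', mul_hstack3, hstack3_colG]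
    congr 1
    apply blkG_congr
    intro i j
    fin_cases i <;> fin_cases j <;>
      (simp only [hgQ]; simp only [hiQ, hiD, hiDQ];
       simp [hd1, hd2, hd3, hΛqd, hΛsd, Matrix.diagonal_conjTranspose,
         Matrix.diagonal_mul_diagonal, Matrix.diagonal_sub]) <;>
      (intro s) <;>
      (simp [qcol, Complex.star_def]; try ring)
  -- claim 1: unitarity
  have hPPH : Pᴴ * P = 1 := by
    rw [hPblk, Matrix.conjTranspose_mul, Matrix.mul_assoc, ← Matrix.mul_assoc 𝕋ᴴ 𝕋,
      h𝕋u, Matrix.one_mul, blkG_conjT, blkG_mul, blkG_one]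
    apply blkG_congr
    intro i j
    rw [Fin.sum_univ_three]
    simp only [hgP, Matrix.diagonal_conjTranspose, Matrix.diagonal_mul_diagonal,
      Matrix.diagonal_add]
    rw [show (if i = j then (1 : Matrix (Fin n) (Fin n) ℂ) else 0)
        = Matrix.diagonal (fun _ => if i = j then (1:ℂ) else 0) from by
      split_ifs <;> simp]
    apply congrArg Matrix.diagonal
    funext s
    simp only [Pi.star_apply, Pi.mul_apply, Pi.add_apply]
    exact scalarPP (a s) (b s) (c s) (x s) (yv s) (hxx s) (hyy s) (hx0 s) (hy0 s) i j
  have hPHP : P * Pᴴ = 1 := mul_eq_one_comm.mp hPPH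
  -- the curl in block form
  have hnega : (Matrix.diagonal fun s => -(a s)) = -Matrix.diagonal a :=
    (Matrix.diagonal_neg a).symm
  have hnegb : (Matrix.diagonal fun s => -(b s)) = -Matrix.diagonal b :=
    (Matrix.diagonal_neg b).symm
  have hnegc : (Matrix.diagonal fun s => -(c s)) = -Matrix.diagonal c :=
    (Matrix.diagonal_neg c).symm
  have hcurl : curlMat C₁ C₂ C₃ = 𝕋 * blkG gC * 𝕋ᴴ := by
    rw [hC1, hC2, hC3, curlMat_blkG, dblk_mul, mul_dblkH]
    apply blkG_congr
    intro i j
    fin_cases i <;> fin_cases j <;>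
      simp [hgC, curlE, hd1, hd2, hd3, Matrix.diagonal_zero] <;>
      simp only [hnega, hnegb, hnegc, Matrix.mul_neg, Matrix.neg_mul]
  -- the core identity
  have hdiagx : ∀ i j : Fin 3, gP i 0 * (Matrix.diagonal (fun s => ((x s : ℂ))) * (gQ j 0)ᴴ)
      + gP i 1 * (Matrix.diagonal (fun s => ((x s : ℂ))) * (gQ j 1)ᴴ) = gC i j := by
    intro i j
    simp only [hgP, hgQ, hgC, Matrix.diagonal_conjTranspose, Matrix.diagonal_mul_diagonal,
      Matrix.diagonal_add]
    apply congrArg Matrix.diagonal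
    funext s
    simp only [Pi.star_apply, Pi.mul_apply, Pi.add_apply]
    rw [show ∀ p q r : ℂ, p * (q * r) = p * q * r from fun p q r => (mul_assoc p q r).symm,
      show ∀ p q r : ℂ, p * (q * r) = p * q * r from fun p q r => (mul_assoc p q r).symm]
    exact scalarSVD (a s) (b s) (c s) (x s) (yv s) (hxx s) (hyy s) (hx0 s) (hy0 s) i j
  -- claim 3
  have hgS3 : blockdiag3 (sqrtDiag Λq) (sqrtDiag Λq) = blkG (fun i j : Fin 3 =>
      if i = j then (if i = 0 then Matrix.diagonal (fun s => ((x s : ℂ)))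
        else if i = 1 then Matrix.diagonal (fun s => ((x s : ℂ))) else 0) else 0) := by
    rw [blockdiag3_blkG, hsQ]
  have hcore3 : blkG gP * (blkG (fun i j : Fin 3 =>
      if i = j then (if i = 0 then Matrix.diagonal (fun s => ((x s : ℂ)))
        else if i = 1 then Matrix.diagonal (fun s => ((x s : ℂ))) else 0) else 0)
      * (blkG gQ)ᴴ) = blkG gC := by
    rw [blkG_conjT, blkG_mul, blkG_mul]
    apply blkG_congr
    intro i j
    rw [Fin.sum_univ_three]
    simp only [Fin.sum_univ_three, reduceIte, Matrix.zero_mul, Matrix.mul_zero,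
      zero_add, add_zero, Matrix.one_mul, if_true, if_false,
      show (0 : Fin 3) ≠ 1 by decide, show (0 : Fin 3) ≠ 2 by decide,
      show (1 : Fin 3) ≠ 0 by decide, show (1 : Fin 3) ≠ 2 by decide,
      show (2 : Fin 3) ≠ 0 by decide, show (2 : Fin 3) ≠ 1 by decide]
    exact hdiagx i j
  have hclaim3 : curlMat C₁ C₂ C₃
      = P * blockdiag3 (sqrtDiag Λq) (sqrtDiag Λq) * Qᴴ := by
    rw [hPblk, hQblk, hgS3, Matrix.conjTranspose_mul, hcurl]
    calc 𝕋 * blkG gC * 𝕋ᴴ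
        = 𝕋 * (blkG gP * (blkG (fun i j : Fin 3 =>
            if i = j then (if i = 0 then Matrix.diagonal (fun s => ((x s : ℂ)))
              else if i = 1 then Matrix.diagonal (fun s => ((x s : ℂ))) else 0) else 0)
            * (blkG gQ)ᴴ)) * 𝕋ᴴ := by rw [hcore3]
      _ = _ := by simp only [Matrix.mul_assoc]
  -- claim 4
  set gP2 : Fin 3 → Fin 2 → Matrix (Fin n) (Fin n) ℂ :=
    fun i j => if j = 0 then gP i 0 else gP i 1 with hgP2
  set gQ2 : Fin 3 → Fin 2 → Matrix (Fin n) (Fin n) ℂ :=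
    fun i j => if j = 0 then gQ i 0 else gQ i 1 with hgQ2
  have hP2blk : hstack2 P₂ P₁ = 𝕋 * blkG gP2 := by
    rw [hP₂', hP₁', mul_hstack2, hstack2_colG]
    congr 1
    apply blkG_congr
    intro i j
    fin_cases i <;> fin_cases j <;>
      (simp only [hgP2, hgP]; simp only [hiQ, hiD, hiDQ];
       simp [hd1, hd2, hd3, hΛqd, hΛsd, Matrix.diagonal_conjTranspose,
         Matrix.diagonal_mul_diagonal, Matrix.diagonal_sub]) <;>
      (intro s) <;>
      (simp [pcol, Complex.star_def]; try ring)
  have hQ2blk : hstack2 Q₁ Q₂ = 𝕋 * blkG gQ2 := by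
    rw [hQ₁', hQ₂', mul_hstack2, hstack2_colG]
    congr 1
    apply blkG_congr
    intro i j
    fin_cases i <;> fin_cases j <;>
      (simp only [hgQ2, hgQ]; simp only [hiQ, hiD, hiDQ];
       simp [hd1, hd2, hd3, hΛqd, hΛsd, Matrix.diagonal_conjTranspose,
         Matrix.diagonal_mul_diagonal, Matrix.diagonal_sub]) <;>
      (intro s) <;>
      (simp [qcol, Complex.star_def]; try ring)
  have hgS2 : blockdiag2 (sqrtDiag Λq) = blkG (fun i j : Fin 2 =>
      if i = j then Matrix.diagonal (fun s => ((x s : ℂ))) else 0) := by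
    rw [blockdiag2_blkG, hsQ]
  have hcore2 : blkG gP2 * (blkG (fun i j : Fin 2 =>
      if i = j then Matrix.diagonal (fun s => ((x s : ℂ))) else 0)
      * (blkG gQ2)ᴴ) = blkG gC := by
    rw [blkG_conjT, blkG_mul, blkG_mul]
    apply blkG_congr
    intro i j
    rw [Fin.sum_univ_two]
    simp only [Fin.sum_univ_two, hgP2, hgQ2, reduceIte, Matrix.zero_mul, Matrix.mul_zero,
      zero_add, add_zero, if_true, if_false,
      show (0 : Fin 2) ≠ 1 by decide, show (1 : Fin 2) ≠ 0 by decide]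
    exact hdiagx i j
  have hclaim4 : curlMat C₁ C₂ C₃
      = hstack2 P₂ P₁ * blockdiag2 (sqrtDiag Λq) * (hstack2 Q₁ Q₂)ᴴ := by
    rw [hP2blk, hQ2blk, hgS2, Matrix.conjTranspose_mul, hcurl]
    calc 𝕋 * blkG gC * 𝕋ᴴ
        = 𝕋 * (blkG gP2 * (blkG (fun i j : Fin 2 =>
            if i = j then Matrix.diagonal (fun s => ((x s : ℂ))) else 0)
            * (blkG gQ2)ᴴ)) * 𝕋ᴴ := by rw [hcore2]
      _ = _ := by simp only [Matrix.mul_assoc]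
  exact ⟨hPPH, hPHP, hclaim3, hclaim4⟩
end

section
/- Let N ≥ m ≥ 1, let Q_r ∈ ℂ^{N×m} satisfy Q_r*Q_r = I_m, let Σ_r ∈ ℂ^{m×m} be diagonal with positive real diagonal entries, set A := Q_r Σ_r² Q_r*, and let B ∈ ℂ^{N×N} be Hermitian positive definite. Then: (i) M := Σ_r Q_r* B⁻¹ Q_r Σ_r is Hermitian positive definite, in particular invertible; (ii) B⁻¹Q_rΣ_r has full column rank m; (iii) A · (B⁻¹Q_rΣ_r) = B · (B⁻¹Q_rΣ_r) · M. Hence the column span of B⁻¹Q_rΣ_r is an m-dimensional invariant subspace of the pencil A x = λ B x corresponding to its nonzero eigenvalues. (Theorem 5.2 of the paper, with N = 3n, m = 2n, A = C*C = Q_rΣ_r²Q_r* from the SVD of the discrete curl operator, and B the diagonal positive definite permittivity matrix.) -/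
open Matrix
open scoped ComplexOrder

/-- Theorem 5.2: with `A = Q_r Σ_r² Q_r*` (from the SVD of the discrete curl
operator) and `B` Hermitian positive definite, `span{B⁻¹Q_rΣ_r}` is an invariant
subspace of the pencil `A x = λ B x` corresponding to its nonzero eigenvalues:
`M = Σ_r Q_r* B⁻¹ Q_r Σ_r` is Hermitian positive definite (in particular invertible),
`B⁻¹Q_rΣ_r` has full column rank `m`, and `A(B⁻¹Q_rΣ_r) = B(B⁻¹Q_rΣ_r)M`. -/
theorem stmt_17 (N m : ℕ) (hm : 1 ≤ m) (hNm : m ≤ N)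
    (Qr : Matrix (Fin N) (Fin m) ℂ) (hQr : Qrᴴ * Qr = 1)
    (d : Fin m → ℝ) (hd : ∀ i, 0 < d i)
    (Sr : Matrix (Fin m) (Fin m) ℂ)
    (hSr : Sr = Matrix.diagonal fun i => ((d i : ℝ) : ℂ))
    (B : Matrix (Fin N) (Fin N) ℂ) (hB : B.PosDef)
    (A : Matrix (Fin N) (Fin N) ℂ) (hA : A = Qr * Sr ^ 2 * Qrᴴ)
    (M : Matrix (Fin m) (Fin m) ℂ) (hM : M = Sr * Qrᴴ * B⁻¹ * Qr * Sr) :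
    M.PosDef ∧ IsUnit M ∧
    (B⁻¹ * Qr * Sr).rank = m ∧
    A * (B⁻¹ * Qr * Sr) = B * (B⁻¹ * Qr * Sr) * M := by
  have hSrH : Srᴴ = Sr := by
    ext i j
    simp only [Matrix.conjTranspose_apply, hSr, Matrix.diagonal_apply]
    rcases eq_or_ne i j with h | h
    · subst h; simp [Complex.conj_ofReal]
    · simp [h, Ne.symm h]
  have hBinvH : (B⁻¹)ᴴ = B⁻¹ := hB.inv.isHermitian.eq
  have hBdet : IsUnit B.det := hB.det_pos.ne'.isUnit
  have hBB : B * B⁻¹ = 1 := Matrix.mul_nonsing_inv B hBdet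
  -- Sr is invertible with Sr * Sr = Sr^2 the square of the diagonal
  have hSrUnit : IsUnit Sr := by
    rw [hSr, Matrix.isUnit_iff_isUnit_det, Matrix.det_diagonal, isUnit_iff_ne_zero]
    exact Finset.prod_ne_zero_iff.mpr fun i _ => Complex.ofReal_ne_zero.mpr (hd i).ne'
  -- X := Qr * Sr ; Xᴴ * X = Sr * Sr
  set X := Qr * Sr with hX
  have hXHX : Xᴴ * X = Sr * Sr := by
    rw [hX, Matrix.conjTranspose_mul, hSrH, Matrix.mul_assoc, ← Matrix.mul_assoc Qrᴴ, hQr,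
      Matrix.one_mul]
  have hXinj : ∀ x : Fin m → ℂ, X *ᵥ x = 0 → x = 0 := by
    intro x hx
    have h1 : (Xᴴ * X) *ᵥ x = 0 := by
      rw [← Matrix.mulVec_mulVec, hx, Matrix.mulVec_zero]
    rw [hXHX] at h1
    have hSS : IsUnit (Sr * Sr) := hSrUnit.mul hSrUnit
    have := Matrix.mulVec_injective_iff_isUnit.mpr hSS
    simpa using this (h1.trans (Matrix.mulVec_zero _).symm)
  have hMX : M = Xᴴ * B⁻¹ * X := by
    rw [hM, hX, Matrix.conjTranspose_mul, hSrH]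
    simp [Matrix.mul_assoc]
  -- M is positive definite
  have hMpd : M.PosDef := by
    rw [hMX]
    refine Matrix.PosDef.of_dotProduct_mulVec_pos ?_ ?_
    · exact Matrix.isHermitian_conjTranspose_mul_mul X (hBinvH : (B⁻¹).IsHermitian)
    · intro x hx
      have hXx : X *ᵥ x ≠ 0 := fun h => hx (hXinj x h)
      have := hB.inv.dotProduct_mulVec_pos hXx
      simpa only [star_mulVec, dotProduct_mulVec, vecMul_vecMul] using this
  have hMunit : IsUnit M := hMpd.isUnit
  refine ⟨hMpd, hMunit, ?_, ?_⟩
  · -- rank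
    set Y := B⁻¹ * Qr * Sr with hY
    have hYH : Yᴴ = Sr * Qrᴴ * B⁻¹ := by
      rw [hY, Matrix.conjTranspose_mul, Matrix.conjTranspose_mul, hSrH, hBinvH]
      simp [Matrix.mul_assoc]
    have hMY : M = (Yᴴ * B) * Y := by
      rw [hYH, hM, hY]
      have : Sr * Qrᴴ * B⁻¹ * B = Sr * Qrᴴ := by
        rw [Matrix.mul_assoc, Matrix.nonsing_inv_mul B hBdet, Matrix.mul_one]
      rw [this]
      simp [Matrix.mul_assoc]
    have h1 : M.rank ≤ Y.rank := hMY ▸ Matrix.rank_mul_le_right (Yᴴ * B) Y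
    have h2 : M.rank = m := by
      rw [Matrix.rank_of_isUnit M hMunit, Fintype.card_fin]
    have h3 : Y.rank ≤ m := by
      simpa using Matrix.rank_le_width Y
    omega
  · -- the pencil equation
    rw [hA, hM]
    have hB1 : B * (B⁻¹ * Qr * Sr) = Qr * Sr := by
      rw [← Matrix.mul_assoc, ← Matrix.mul_assoc, hBB, Matrix.one_mul]
    rw [hB1, pow_two]
    simp [Matrix.mul_assoc]
end

section
/- Let N ≥ m ≥ 1, let Q_r ∈ ℂ^{N×m} satisfy Q_r*Q_r = I_m, let Σ_r ∈ ℂ^{m×m} be diagonal with positive real diagonal entries, set A := Q_r Σ_r² Q_r* and A_r := Σ_r Q_r* B⁻¹ Q_r Σ_r, where B ∈ ℂ^{N×N} is Hermitian positive definite. Then the spectrum of A_r coincides with the set of nonzero eigenvalues of the generalized eigenvalue problem A x = λ B x: { λ ∈ ℂ : ∃ y ∈ ℂ^m, y ≠ 0, A_r y = λ y } = { λ ∈ ℂ : λ ≠ 0 and ∃ x ∈ ℂ^N, x ≠ 0, A x = λ B x }. (Section 5.2: the null-space free standard eigenvalue problem A_r y = λ y has exactly the nonzero eigenvalues of the generalized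 eigenvalue problem A x = λ B x.) -/
open Matrix
open scoped ComplexOrder

/-- Section 5.2: the null-space free standard eigenvalue problem
`A_r y = λ y`, `A_r = Σ_r Q_r* B⁻¹ Q_r Σ_r`, has exactly the nonzero eigenvalues
of the generalized eigenvalue problem `A x = λ B x` with `A = Q_r Σ_r² Q_r*`. -/
theorem stmt_18 (N m : ℕ) (hm : 1 ≤ m) (hNm : m ≤ N)
    (Qr : Matrix (Fin N) (Fin m) ℂ) (hQr : Qrᴴ * Qr = 1)
    (d : Fin m → ℝ) (hd : ∀ i, 0 < d i)
    (Sr : Matrix (Fin m) (Fin m) ℂ)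
    (hSr : Sr = Matrix.diagonal fun i => ((d i : ℝ) : ℂ))
    (B : Matrix (Fin N) (Fin N) ℂ) (hB : B.PosDef)
    (A : Matrix (Fin N) (Fin N) ℂ) (hA : A = Qr * Sr ^ 2 * Qrᴴ)
    (Ar : Matrix (Fin m) (Fin m) ℂ) (hAr : Ar = Sr * Qrᴴ * B⁻¹ * Qr * Sr) :
    {lam : ℂ | ∃ y : Fin m → ℂ, y ≠ 0 ∧ Ar.mulVec y = lam • y}
      = {lam : ℂ | lam ≠ 0 ∧ ∃ x : Fin N → ℂ, x ≠ 0 ∧ A.mulVec x = lam • B.mulVec x} := by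
  have hBinv : B⁻¹.PosDef := hB.inv
  have hBdet : IsUnit B.det := (Matrix.isUnit_iff_isUnit_det B).mp hB.isUnit
  have hBB : B * B⁻¹ = 1 := mul_nonsing_inv B hBdet
  have hBBi : B⁻¹ * B = 1 := nonsing_inv_mul B hBdet
  have hdC : ∀ i, ((d i : ℝ) : ℂ) ≠ 0 := fun i => by exact_mod_cast (hd i).ne'
  have hSrH : Srᴴ = Sr := by
    subst hSr; simp [diagonal_conjTranspose, Function.comp]
  have hSrVec : ∀ v : Fin m → ℂ, Sr.mulVec v = fun i => (d i : ℂ) * v i := by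
    intro v; ext i; subst hSr; simp [mulVec_diagonal]
  have hSrInj : ∀ v : Fin m → ℂ, Sr.mulVec v = 0 → v = 0 := by
    intro v hv
    ext i
    have := congrFun (hSrVec v ▸ hv) i
    simpa [hdC i] using this
  have hQv : ∀ v : Fin m → ℂ, Qrᴴ.mulVec (Qr.mulVec v) = v := by
    intro v; rw [mulVec_mulVec, hQr, one_mulVec]
  have hQSne : ∀ v : Fin m → ℂ, v ≠ 0 → (Qr * Sr).mulVec v ≠ 0 := by
    intro v hv h
    rw [← mulVec_mulVec] at h
    exact hv (hSrInj v (by rw [← hQv (Sr.mulVec v), h, mulVec_zero]))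
  have hArEq : Sr * Qrᴴ * B⁻¹ * Qr * Sr = (Qr * Sr)ᴴ * B⁻¹ * (Qr * Sr) := by
    rw [conjTranspose_mul, hSrH]; simp only [Matrix.mul_assoc]
  have key : ∀ v : Fin m → ℂ, star v ⬝ᵥ (Sr * Qrᴴ * B⁻¹ * Qr * Sr).mulVec v
      = star ((Qr * Sr).mulVec v) ⬝ᵥ B⁻¹.mulVec ((Qr * Sr).mulVec v) := by
    intro v
    rw [hArEq]
    simp only [star_mulVec, dotProduct_mulVec, vecMul_vecMul, Matrix.mul_assoc]
  ext lam
  simp only [Set.mem_setOf_eq]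
  constructor
  · rintro ⟨y, hy, hAy⟩
    have hAry : (Sr * Qrᴴ * B⁻¹ * Qr * Sr).mulVec y = lam • y := by rw [← hAr]; exact hAy
    set z := (Qr * Sr).mulVec y with hzdef
    have hz : z ≠ 0 := hQSne y hy
    have hpos : 0 < star z ⬝ᵥ B⁻¹.mulVec z := hBinv.dotProduct_mulVec_pos hz
    have hlam : lam ≠ 0 := by
      intro h0
      have : star y ⬝ᵥ (Sr * Qrᴴ * B⁻¹ * Qr * Sr).mulVec y = 0 := by
        rw [hAry, h0, zero_smul, dotProduct_zero]
      rw [key y] at this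
      exact hpos.ne' this
    refine ⟨hlam, B⁻¹.mulVec z, ?_, ?_⟩
    · intro h0
      apply hz
      have := congrArg (B.mulVec ·) h0
      simpa [mulVec_mulVec, hBB] using this
    · rw [hA]
      simp only [mulVec_mulVec, hzdef]
      have h1 : Qr * Sr ^ 2 * Qrᴴ * (B⁻¹ * (Qr * Sr)) = (Qr * Sr) * (Sr * Qrᴴ * B⁻¹ * Qr * Sr) := by
        rw [pow_two]; simp only [Matrix.mul_assoc]
      have h2 : B * (B⁻¹ * (Qr * Sr)) = Qr * Sr := by rw [← Matrix.mul_assoc, hBB, Matrix.one_mul]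
      rw [h1, h2, ← mulVec_mulVec, hAry, mulVec_smul]
  · rintro ⟨hlam, x, hx, hAx⟩
    refine ⟨Sr.mulVec (Qrᴴ.mulVec x), ?_, ?_⟩
    · intro h0
      have hQx : Qrᴴ.mulVec x = 0 := hSrInj _ h0
      have hAx0 : A.mulVec x = 0 := by
        rw [hA, ← mulVec_mulVec, hQx, mulVec_zero]
      have hBx : B.mulVec x = 0 := by
        have : lam • B.mulVec x = 0 := by rw [← hAx, hAx0]
        exact (smul_eq_zero.mp this).resolve_left hlam
      apply hx
      have := congrArg (B⁻¹.mulVec ·) hBx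
      simpa [mulVec_mulVec, hBBi] using this
    · rw [hAr]
      simp only [mulVec_mulVec]
      have h1 : Sr * Qrᴴ * B⁻¹ * Qr * Sr * (Sr * Qrᴴ) = (Sr * Qrᴴ * B⁻¹) * (Qr * Sr ^ 2 * Qrᴴ) := by
        rw [pow_two]; simp only [Matrix.mul_assoc]
      have h2 : Sr * Qrᴴ * B⁻¹ * B = Sr * Qrᴴ := by
        rw [Matrix.mul_assoc, hBBi, Matrix.mul_one]
      rw [h1, ← mulVec_mulVec, ← hA, hAx, mulVec_smul, mulVec_mulVec, h2]
end
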